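/- For every positive integer n, log p^(j)_n ~ j log j as j → ∞. -/

import Mathlib

open Filter Topology

/-- `pseq n` is the `n`-th prime number, with `pseq 1 = 2`. -/
noncomputable def pseq (n : ℕ) : ℕ := Nat.nth Nat.Prime (n - 1)

/-- `pk k n = p^(k)_n`: the `k`-fold iterate of `n ↦ p_n` applied to `n`. -/
noncomputable def pk (k n : ℕ) : ℕ := pseq^[k] n

private lemma prime_nth_prime (k : ℕ) : Nat.Prime (Nat.nth Nat.Prime k) :=
  Nat.nth_mem_of_infinite Nat.infinite_setOf_prime k

private lemma nth_mono : Monotone (Nat.nth Nat.Prime) :=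
  Nat.nth_monotone Nat.infinite_setOf_prime

private lemma aux1 (k m : ℕ) :
    Nat.nth Nat.Prime k ^ (m + 1 - k) ≤ 4 ^ Nat.nth Nat.Prime m := by
  calc Nat.nth Nat.Prime k ^ (m + 1 - k)
      = ∏ _i ∈ Finset.Ico k (m+1), Nat.nth Nat.Prime k := by
        rw [Finset.prod_const, Nat.card_Ico]
    _ ≤ ∏ i ∈ Finset.Ico k (m+1), Nat.nth Nat.Prime i := by
        apply Finset.prod_le_prod (fun _ _ => Nat.zero_le _)
        intro i hi
        exact nth_mono (Finset.mem_Ico.1 hi).1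
    _ = ∏ p ∈ (Finset.Ico k (m+1)).image (Nat.nth Nat.Prime), p := by
        rw [Finset.prod_image]
        intro a _ b _ h
        exact Nat.nth_injective Nat.infinite_setOf_prime h
    _ ≤ ∏ p ∈ (Finset.range (Nat.nth Nat.Prime m + 1)).filter Nat.Prime, p := by
        apply Finset.prod_le_prod_of_subset_of_one_le'
        · intro p hp
          obtain ⟨i, hi, rfl⟩ := Finset.mem_image.1 hp
          rw [Finset.mem_filter, Finset.mem_range]
          exact ⟨Nat.lt_succ_of_le (nth_mono (Nat.lt_succ_iff.1 (Finset.mem_Ico.1 hi).2)),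
            prime_nth_prime i⟩
        · intro p hp _
          exact (Nat.prime_of_mem_primesBelow hp).one_lt.le
    _ = primorial (Nat.nth Nat.Prime m) := rfl
    _ ≤ 4 ^ Nat.nth Nat.Prime m := primorial_le_4_pow _

private lemma nth_ge (k : ℕ) : k + 2 ≤ Nat.nth Nat.Prime k := by
  induction k with
  | zero => simp [Nat.nth_prime_zero_eq_two]
  | succ k ih =>
      have h : Nat.nth Nat.Prime k < Nat.nth Nat.Prime (k+1) :=
        (Nat.nth_lt_nth Nat.infinite_setOf_prime).2 (Nat.lt_succ_self k)
      omega

private lemma prime_lb {m : ℕ} (hm : 16 ≤ m) :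
    (m : ℝ) * Real.log m ≤ 16 * Nat.nth Nat.Prime m := by
  set k := m / 2 with hk
  set N := Nat.nth Nat.Prime m with hN
  have hcast : ((Nat.nth Nat.Prime k ^ (m + 1 - k) : ℕ) : ℝ) ≤ ((4 ^ N : ℕ) : ℝ) := by
    exact_mod_cast aux1 k m
  have hm_pos : (0:ℝ) < (m:ℝ) := by exact_mod_cast (show 0 < m by omega)
  have hq_pos : (0:ℝ) < Nat.nth Nat.Prime k := by
    have := nth_ge k
    exact_mod_cast (show 0 < Nat.nth Nat.Prime k by omega)
  have hlog : ((m + 1 - k : ℕ) : ℝ) * Real.log (Nat.nth Nat.Prime k) ≤ N * Real.log 4 := by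
    push_cast at hcast
    have := Real.log_le_log (by positivity) hcast
    rwa [Real.log_pow, Real.log_pow] at this
  have hk_le : ((k:ℝ)) ≥ (m:ℝ)/4 := by
    have : m ≤ 4 * k := by omega
    have : (m:ℝ) ≤ 4 * k := by exact_mod_cast this
    linarith
  have hmk : ((m + 1 - k : ℕ) : ℝ) ≥ (m:ℝ)/2 := by
    have : 2 * (m + 1 - k) ≥ m := by omega
    have : (m:ℝ) ≤ 2 * ((m + 1 - k : ℕ):ℝ) := by exact_mod_cast this
    linarith
  have hlogm : Real.log 16 ≤ Real.log m := by
    apply Real.log_le_log (by norm_num)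
    exact_mod_cast hm
  have hlog16 : Real.log 16 = 2 * Real.log 4 := by
    rw [show (16:ℝ) = 4^2 by norm_num, Real.log_pow]; push_cast; ring
  have hlogq : Real.log (Nat.nth Nat.Prime k) ≥ Real.log m / 2 := by
    have h1 : Real.log (Nat.nth Nat.Prime k) ≥ Real.log ((m:ℝ)/4) := by
      apply Real.log_le_log (by positivity)
      calc (m:ℝ)/4 ≤ (k:ℝ) := hk_le
        _ ≤ Nat.nth Nat.Prime k := by exact_mod_cast (nth_ge k).trans' (by omega)
    have h2 : Real.log ((m:ℝ)/4) = Real.log m - Real.log 4 := by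
      rw [Real.log_div (by positivity) (by norm_num)]
    have hlog4 : Real.log 4 ≤ Real.log m / 2 := by
      rw [hlog16] at hlogm; linarith
    linarith
  have hlog4_pos : (0:ℝ) < Real.log 4 := Real.log_pos (by norm_num)
  have hlogm_pos : (0:ℝ) < Real.log m := lt_of_lt_of_le (by positivity : (0:ℝ) < Real.log 16) hlogm
  have key : (m:ℝ)/2 * (Real.log m / 2) ≤ N * Real.log 4 := by
    calc (m:ℝ)/2 * (Real.log m / 2) ≤ ((m + 1 - k : ℕ) : ℝ) * Real.log (Nat.nth Nat.Prime k) := by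
          apply mul_le_mul hmk hlogq (by positivity) (by positivity)
      _ ≤ N * Real.log 4 := hlog
  have h4 : Real.log 4 ≤ (4:ℝ) := by
    calc Real.log 4 ≤ 4 - 1 := Real.log_le_sub_one_of_pos (by norm_num)
      _ ≤ 4 := by norm_num
  nlinarith [Nat.cast_nonneg (α := ℝ) N]

private lemma centralBinom_le (n : ℕ) (hn : 1 ≤ n) :
    Nat.centralBinom n ≤ (2*n) ^ (Nat.primeCounting' (2*n+1)) := by
  have hpos : 0 < Nat.centralBinom n := Nat.centralBinom_pos n
  conv_lhs => rw [← Nat.factorization_prod_pow_eq_self hpos.ne']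
  rw [Nat.prod_factorization_eq_prod_primeFactors]
  have hsub : (Nat.centralBinom n).primeFactors ⊆ Nat.primesBelow (2*n+1) := by
    intro p hp
    have hple : p ^ (Nat.centralBinom n).factorization p ≤ 2 * n := by
      rw [Nat.centralBinom]
      exact Nat.pow_factorization_choose_le (by omega)
    have hp1 : 1 ≤ (Nat.centralBinom n).factorization p :=
      (Nat.Prime.factorization_pos_of_dvd (Nat.prime_of_mem_primeFactors hp) hpos.ne'
        (Nat.dvd_of_mem_primeFactors hp))
    have : p ≤ 2*n := le_trans (Nat.le_self_pow (by omega) p) hple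
    exact Nat.mem_primesBelow.2 ⟨by omega, Nat.prime_of_mem_primeFactors hp⟩
  calc ∏ p ∈ (Nat.centralBinom n).primeFactors, p ^ (Nat.centralBinom n).factorization p
      ≤ ∏ p ∈ (Nat.centralBinom n).primeFactors, 2*n := by
        apply Finset.prod_le_prod (fun _ _ => Nat.zero_le _)
        intro p hp
        rw [Nat.centralBinom]
        exact Nat.pow_factorization_choose_le (by omega)
    _ = (2*n) ^ (Nat.centralBinom n).primeFactors.card := by rw [Finset.prod_const]
    _ ≤ (2*n) ^ (Nat.primeCounting' (2*n+1)) := by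
        apply Nat.pow_le_pow_right (by omega)
        rw [← Nat.primesBelow_card_eq_primeCounting']
        exact Finset.card_le_card hsub

private lemma pi_lb (n : ℕ) (hn : 4 ≤ n) :
    4^n ≤ (2*n) ^ (Nat.primeCounting' (2*n+1) + 1) := by
  calc 4^n ≤ n * Nat.centralBinom n := (Nat.four_pow_lt_mul_centralBinom n hn).le
    _ ≤ (2*n) * (2*n) ^ (Nat.primeCounting' (2*n+1)) := by
        apply Nat.mul_le_mul (by omega) (centralBinom_le n (by omega))
    _ = (2*n) ^ (Nat.primeCounting' (2*n+1) + 1) := by ring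

private lemma count_eq (m : ℕ) (hm : 1 ≤ m) :
    Nat.primeCounting' (Nat.nth Nat.Prime m + 2) = m + 1 := by
  set N := Nat.nth Nat.Prime m with hN
  have hNval : Nat.primeCounting' N = m := Nat.primeCounting'_nth_eq m
  have hN3 : 3 ≤ N := by have := nth_ge m; omega
  have hodd : ¬ Nat.Prime (N + 1) := by
    have hNp : Nat.Prime N := prime_nth_prime m
    have hN2 : N % 2 = 1 := by
      rcases hNp.eq_two_or_odd with h | h
      · omega
      · exact h
    intro hp
    rcases hp.eq_two_or_odd with h | h <;> omega
  have h1 : Nat.primeCounting' (N + 1) = m + 1 := by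
    rw [Nat.primeCounting', Nat.count_succ, ← Nat.primeCounting']
    rw [hNval]
    simp [prime_nth_prime m]
    exact prime_nth_prime m
  rw [show N + 2 = (N + 1) + 1 by ring, Nat.primeCounting', Nat.count_succ,
    ← Nat.primeCounting', h1]
  simp [hodd]

-- Chebyshev upper bound

set_option maxHeartbeats 1000000 in
private lemma prime_ub {m : ℕ} (hm : 5 ≤ m) :
    (Nat.nth Nat.Prime m : ℝ) ≤ 36 * m * Real.log m := by
  set N := Nat.nth Nat.Prime m with hN
  have hN3 : m + 2 ≤ N := nth_ge m
  have hNodd : N % 2 = 1 := by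
    have hNp : Nat.Prime N := prime_nth_prime m
    rcases hNp.eq_two_or_odd with h | h
    · omega
    · exact h
  set q : ℕ := (N+1)/2 with hq
  have h2q : 2 * q = N + 1 := by omega
  have hq4 : 4 ≤ q := by omega
  have hcount : Nat.primeCounting' (2*q+1) = m + 1 := by
    rw [show 2*q+1 = N+2 by omega]
    exact count_eq m (by omega)
  have hnat : 4^q ≤ (N+1)^(m+2) := by
    have := pi_lb q hq4
    rwa [hcount, h2q] at this
  -- real logs
  have hNpos : (0:ℝ) < N := by exact_mod_cast (show 0 < N by omega)
  have hm5 : (5:ℝ) ≤ m := by exact_mod_cast hm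
  have hmpos : (0:ℝ) < m := by exact_mod_cast (show 0 < m by omega)
  have hcastq : (0:ℝ) < q := by exact_mod_cast (show 0 < q by omega)
  have hlog : (q:ℝ) * Real.log 4 ≤ (m+2) * Real.log (N+1) := by
    have hcast : ((4:ℕ):ℝ)^q ≤ ((N+1:ℕ):ℝ)^(m+2) := by exact_mod_cast hnat
    have := Real.log_le_log (by positivity) hcast
    rw [Real.log_pow, Real.log_pow] at this
    push_cast at this ⊢
    convert this using 2 <;> norm_num
  have hlog2 : Real.log 4 = 2 * Real.log 2 := by
    rw [show (4:ℝ) = 2^2 by norm_num, Real.log_pow]; push_cast; ring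
  have hqN : (N:ℝ) ≤ 2 * q := by
    have : N ≤ 2 * q := by omega
    exact_mod_cast this
  have hkey : (N:ℝ) * Real.log 2 ≤ (m+2) * Real.log (N+1) := by
    calc (N:ℝ) * Real.log 2 ≤ (2*q) * Real.log 2 := by
          apply mul_le_mul_of_nonneg_right hqN (Real.log_nonneg (by norm_num))
      _ = q * Real.log 4 := by rw [hlog2]; ring
      _ ≤ (m+2) * Real.log (N+1) := hlog
  -- bootstrap: log (N+1) ≤ 2 * sqrt (N+1)
  have hlogsqrt : ∀ x : ℝ, 0 < x → Real.log x ≤ 2 * Real.sqrt x := by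
    intro x hx
    have h1 : Real.log x = 2 * Real.log (Real.sqrt x) := by
      rw [Real.log_sqrt hx.le]; ring
    have h2 : Real.log (Real.sqrt x) ≤ Real.sqrt x - 1 :=
      Real.log_le_sub_one_of_pos (Real.sqrt_pos.2 hx)
    nlinarith [Real.sqrt_nonneg x]
  have hlog2_lb : (0.6931471803:ℝ) < Real.log 2 := Real.log_two_gt_d9
  have hs2 : Real.sqrt 2 ≤ 1.5 := by
    nlinarith [Real.sq_sqrt (show (0:ℝ) ≤ 2 by norm_num), Real.sqrt_nonneg 2]
  set s := Real.sqrt N with hs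
  have hs_sq : s^2 = N := Real.sq_sqrt hNpos.le
  have hs_pos : 0 < s := Real.sqrt_pos.2 hNpos
  have hsN1 : Real.sqrt (N+1) ≤ 1.5 * s := by
    have h1 : Real.sqrt (N+1) ≤ Real.sqrt (2*N) := by
      apply Real.sqrt_le_sqrt
      have hN1 : (1:ℝ) ≤ N := by exact_mod_cast (show 1 ≤ N by omega)
      linarith
    have h2 : Real.sqrt (2*N) = Real.sqrt 2 * s := by
      rw [Real.sqrt_mul (by norm_num)]
    rw [h2] at h1
    nlinarith
  -- N ≤ 25 (m+2)^2
  have hquad : (N:ℝ) ≤ 25 * (m+2)^2 := by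
    have h1 : (N:ℝ) * Real.log 2 ≤ (m+2) * (2 * Real.sqrt (N+1)) := by
      calc (N:ℝ) * Real.log 2 ≤ (m+2) * Real.log (N+1) := hkey
        _ ≤ (m+2) * (2 * Real.sqrt (N+1)) := by
            apply mul_le_mul_of_nonneg_left (hlogsqrt _ (by positivity)) (by positivity)
    have h2 : s^2 * Real.log 2 ≤ (m+2) * (3 * s) := by
      rw [hs_sq]
      calc (N:ℝ) * Real.log 2 ≤ (m+2) * (2 * Real.sqrt (N+1)) := h1
        _ ≤ (m+2) * (3 * s) := by
            apply mul_le_mul_of_nonneg_left _ (by positivity)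
            nlinarith
    have h3 : s ≤ 5 * (m+2) := by nlinarith
    nlinarith
  have hlogN1 : Real.log (N+1) ≤ 6 * Real.log (m+2) := by
    have h1 : Real.log (N+1) ≤ Real.log (26 * (m+2)^2) := by
      apply Real.log_le_log (by positivity)
      nlinarith
    have h2 : Real.log (26 * (m+2)^2) = Real.log 26 + 2 * Real.log (m+2) := by
      rw [Real.log_mul (by norm_num) (by positivity), Real.log_pow]
      push_cast; ring
    have h3 : Real.log 26 ≤ 4 * Real.log (m+2) := by
      have : Real.log 26 ≤ Real.log ((m+2)^4) := by
        apply Real.log_le_log (by norm_num)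
        nlinarith [sq_nonneg ((m:ℝ)+2), sq_nonneg (((m:ℝ)+2)^2 - 7^2)]
      rwa [Real.log_pow] at this
      -- push_cast issue?
    linarith
  have hlogm2 : Real.log ((m:ℝ)+2) ≤ 2 * Real.log m := by
    have : Real.log ((m:ℝ)+2) ≤ Real.log ((m:ℝ)^2) := by
      apply Real.log_le_log (by positivity)
      nlinarith
    rwa [Real.log_pow] at this
  have hm2 : ((m:ℝ)+2) ≤ 2*m := by linarith
  have hlogm_pos : 0 < Real.log m := Real.log_pos (by exact_mod_cast (show 1 < m by omega))
  have h1 : (N:ℝ) * Real.log 2 ≤ 24 * m * Real.log m := by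
    calc (N:ℝ) * Real.log 2 ≤ (m+2) * Real.log (N+1) := hkey
      _ ≤ (2*m) * (6 * (2 * Real.log m)) := by
          apply mul_le_mul hm2 (by linarith) (Real.log_nonneg (by linarith)) (by positivity)
      _ = 24 * m * Real.log m := by ring
  nlinarith [mul_pos hmpos hlogm_pos]



private lemma pseq_ge {M : ℕ} (h : 1 ≤ M) : M + 1 ≤ pseq M := by
  have := nth_ge (M - 1)
  unfold pseq
  omega

private lemma pk_ge (n : ℕ) (hn : 1 ≤ n) (j : ℕ) : n + j ≤ pk j n := by
  induction j with
  | zero => simp [pk]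
  | succ j ih =>
      have h1 : 1 ≤ pk j n := by omega
      have h2 : pk (j+1) n = pseq (pk j n) := by
        unfold pk; rw [Function.iterate_succ_apply']
      have := pseq_ge h1
      omega

private lemma log_le_add_one (M : ℕ) (hM : 2 ≤ M) :
    Real.log ((M:ℝ) - 1) ≤ Real.log M ∧ Real.log M - Real.log 2 ≤ Real.log ((M:ℝ) - 1) := by
  have hM2 : (2:ℝ) ≤ M := by exact_mod_cast hM
  constructor
  · exact Real.log_le_log (by linarith) (by linarith)
  · have : Real.log ((M:ℝ)/2) ≤ Real.log ((M:ℝ) - 1) :=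
      Real.log_le_log (by linarith) (by linarith)
    rw [Real.log_div (by linarith) (by norm_num)] at this
    linarith

private lemma pseq_log_ub {M : ℕ} (h : 100 ≤ M) :
    Real.log (pseq M) ≤ Real.log M + Real.log (Real.log M) + 36 := by
  set m := M - 1 with hm
  have hm99 : 99 ≤ m := by omega
  have hmM : (m:ℝ) = (M:ℝ) - 1 := by
    have h' : m + 1 = M := by omega
    have : (m:ℝ) + 1 = M := by exact_mod_cast h'
    linarith
  have hMpos : (2:ℝ) ≤ (M:ℝ) := by exact_mod_cast (show 2 ≤ M by omega)
  have hlogM : Real.log 2 ≤ Real.log M := Real.log_le_log (by norm_num) hMpos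
  have hlog2 : (0:ℝ) < Real.log 2 := Real.log_pos (by norm_num)
  have hmpos : (1:ℝ) ≤ (m:ℝ) := by exact_mod_cast (show 1 ≤ m by omega)
  have h1 : (Nat.nth Nat.Prime m : ℝ) ≤ 36 * m * Real.log m := prime_ub (by omega)
  have hlogm_le : Real.log m ≤ Real.log M := by
    apply Real.log_le_log (by linarith)
    rw [hmM]; linarith
  have h2 : (Nat.nth Nat.Prime m : ℝ) ≤ 36 * M * Real.log M := by
    calc (Nat.nth Nat.Prime m : ℝ) ≤ 36 * m * Real.log m := h1
      _ ≤ 36 * M * Real.log M := by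
          apply mul_le_mul _ hlogm_le (Real.log_nonneg hmpos) (by positivity)
          rw [hmM]; linarith
  have hq_pos : (0:ℝ) < (Nat.nth Nat.Prime m : ℝ) := by
    have := nth_ge m
    exact_mod_cast (show 0 < Nat.nth Nat.Prime m by omega)
  have h3 : Real.log (Nat.nth Nat.Prime m : ℝ) ≤ Real.log (36 * M * Real.log M) :=
    Real.log_le_log hq_pos h2
  have hlogM_pos : (0:ℝ) < Real.log M := lt_of_lt_of_le hlog2 hlogM
  have h4 : Real.log (36 * (M:ℝ) * Real.log M)
      = Real.log 36 + Real.log M + Real.log (Real.log M) := by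
    rw [Real.log_mul (by positivity) (by positivity), Real.log_mul (by norm_num) (by positivity)]
  have h36 : Real.log 36 ≤ 36 := by
    have := Real.log_le_sub_one_of_pos (show (0:ℝ) < 36 by norm_num); linarith
  have hps : Real.log (pseq M) = Real.log (Nat.nth Nat.Prime m : ℝ) := by rfl
  rw [hps]
  linarith

private lemma pseq_log_lb {M : ℕ} (h : 100 ≤ M) :
    Real.log M + Real.log (Real.log M) - 36 ≤ Real.log (pseq M) := by
  set m := M - 1 with hm
  have hm99 : 99 ≤ m := by omega
  have hmM : (m:ℝ) = (M:ℝ) - 1 := by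
    have h' : m + 1 = M := by omega
    have : (m:ℝ) + 1 = M := by exact_mod_cast h'
    linarith
  have hMpos : (2:ℝ) ≤ (M:ℝ) := by exact_mod_cast (show 2 ≤ M by omega)
  have hmpos : (1:ℝ) ≤ (m:ℝ) := by exact_mod_cast (show 1 ≤ m by omega)
  have hlog2 : (0:ℝ) < Real.log 2 := Real.log_pos (by norm_num)
  have hlog2_1 : Real.log 2 ≤ 1 := by
    have := Real.log_le_sub_one_of_pos (show (0:ℝ) < 2 by norm_num); linarith
  -- log M ≥ log 100 ≥ 2
  have hlogM_ge : (2:ℝ) * Real.log 2 ≤ Real.log M := by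
    have : Real.log 4 ≤ Real.log M := by
      apply Real.log_le_log (by norm_num)
      exact_mod_cast (show (4:ℕ) ≤ M by omega)
    rw [show (4:ℝ) = 2^2 by norm_num, Real.log_pow] at this
    push_cast at this
    linarith
  have hlogM_pos : (0:ℝ) < Real.log M := by linarith
  -- log m ≥ log M - log 2 ≥ log M / 2
  have hlogm_ge : Real.log M - Real.log 2 ≤ Real.log m := by
    have := (log_le_add_one M (by omega)).2
    rw [← hmM] at this
    exact this
  have hlogm_half : Real.log M / 2 ≤ Real.log m := by linarith
  have hlogm_pos : (0:ℝ) < Real.log m := by linarith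
  -- prime_lb
  have h1 : (m : ℝ) * Real.log m / 16 ≤ (Nat.nth Nat.Prime m : ℝ) := by
    have := prime_lb (show 16 ≤ m by omega)
    linarith
  have hq_pos : (0:ℝ) < (Nat.nth Nat.Prime m : ℝ) := by
    have := nth_ge m
    exact_mod_cast (show 0 < Nat.nth Nat.Prime m by omega)
  have h3 : Real.log ((m : ℝ) * Real.log m / 16) ≤ Real.log (Nat.nth Nat.Prime m : ℝ) :=
    Real.log_le_log (by positivity) h1
  have h4 : Real.log ((m : ℝ) * Real.log m / 16)
      = Real.log m + Real.log (Real.log m) - Real.log 16 := by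
    rw [Real.log_div (by positivity) (by norm_num),
      Real.log_mul (by positivity) (by positivity)]
  have h16 : Real.log 16 ≤ 16 := by
    have := Real.log_le_sub_one_of_pos (show (0:ℝ) < 16 by norm_num); linarith
  -- log log m ≥ log (log M / 2) = log log M - log 2
  have h5 : Real.log (Real.log M) - Real.log 2 ≤ Real.log (Real.log m) := by
    have : Real.log (Real.log M / 2) ≤ Real.log (Real.log m) :=
      Real.log_le_log (by positivity) hlogm_half
    rwa [Real.log_div (by positivity) (by norm_num)] at this
  have hps : Real.log (pseq M) = Real.log (Nat.nth Nat.Prime m : ℝ) := by rfl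
  rw [hps]
  have hlogm_le : Real.log m ≤ Real.log M := by
    apply Real.log_le_log (by linarith)
    rw [hmM]; linarith
  linarith

private noncomputable def LL (n j : ℕ) : ℝ := Real.log (pk j n)

private lemma pk_succ (j n : ℕ) : pk (j+1) n = pseq (pk j n) := by
  unfold pk; rw [Function.iterate_succ_apply']

private lemma pk100 {n : ℕ} (hn : 1 ≤ n) {j : ℕ} (hj : 99 ≤ j) : 100 ≤ pk j n := by
  have := pk_ge n hn j; omega

private lemma LL_nonneg {n : ℕ} (hn : 1 ≤ n) (j : ℕ) : 0 ≤ LL n j := by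
  apply Real.log_nonneg
  have := pk_ge n hn j
  exact_mod_cast (show 1 ≤ pk j n by omega)

private lemma LL_lb {n : ℕ} (hn : 1 ≤ n) (j : ℕ) : Real.log (1 + (j:ℝ)) ≤ LL n j := by
  apply Real.log_le_log (by positivity)
  have := pk_ge n hn j
  exact_mod_cast (show 1 + j ≤ pk j n by omega)

private lemma LL_one {n : ℕ} (hn : 1 ≤ n) {j : ℕ} (hj : 99 ≤ j) : 1 ≤ LL n j := by
  have h100 : (100:ℝ) ≤ pk j n := by exact_mod_cast pk100 hn hj
  have h1 : Real.log 100 ≤ LL n j := Real.log_le_log (by norm_num) h100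
  have h2 : Real.exp 1 ≤ 100 := by
    have := Real.exp_one_lt_d9; linarith
  have := Real.log_le_log (Real.exp_pos 1) h2
  rw [Real.log_exp] at this
  linarith

private lemma step_ub {n : ℕ} (hn : 1 ≤ n) {j : ℕ} (hj : 99 ≤ j) :
    LL n (j+1) ≤ LL n j + Real.log (LL n j) + 36 := by
  have h := pseq_log_ub (pk100 hn hj)
  rw [show LL n (j+1) = Real.log (pseq (pk j n)) by rw [LL, pk_succ]]
  exact h

private lemma step_lb {n : ℕ} (hn : 1 ≤ n) {j : ℕ} (hj : 99 ≤ j) :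
    LL n j + Real.log (LL n j) - 36 ≤ LL n (j+1) := by
  have h := pseq_log_lb (pk100 hn hj)
  rw [show LL n (j+1) = Real.log (pseq (pk j n)) by rw [LL, pk_succ]]
  exact h

-- helper : eventually 2√t + C ≤ δ t

private lemma sqrt_helper {δ C : ℝ} (hδ : 0 < δ) :
    ∃ T : ℝ, 0 ≤ T ∧ ∀ t, T ≤ t → 2 * Real.sqrt t + C ≤ δ * t := by
  refine ⟨max (16/δ^2) (max (2*C/δ) 0), le_max_of_le_right (le_max_right _ _), fun t ht => ?_⟩
  have ht0 : 0 ≤ t := le_trans (le_max_of_le_right (le_max_right _ _)) ht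
  have h16 : 16/δ^2 ≤ t := le_trans (le_max_left _ _) ht
  have hC : 2*C/δ ≤ t := le_trans (le_max_of_le_right (le_max_left _ _)) ht
  set s := Real.sqrt t with hs
  have hs_sq : s^2 = t := Real.sq_sqrt ht0
  have hs0 : 0 ≤ s := Real.sqrt_nonneg t
  have h4 : 4/δ ≤ s := by
    have : Real.sqrt (16/δ^2) ≤ s := Real.sqrt_le_sqrt h16
    rwa [show 16/δ^2 = (4/δ)^2 by ring, Real.sqrt_sq (by positivity)] at this
  have hδs : 4 ≤ δ * s := by
    rw [div_le_iff₀ hδ] at h4; linarith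
  have h1 : 2 * s ≤ δ/2 * t := by
    rw [← hs_sq]; nlinarith
  have h2 : C ≤ δ/2 * t := by
    rw [div_le_iff₀ hδ] at hC; linarith
  linarith

-- fact F : log w ≤ (w+1)log(w+1) - w log w for w ≥ 1

private lemma factF {w : ℝ} (hw : 1 ≤ w) :
    Real.log w ≤ (w+1) * Real.log (w+1) - w * Real.log w := by
  have h1 : Real.log w ≤ Real.log (w+1) := Real.log_le_log (by linarith) (by linarith)
  nlinarith

-- fact F2 : (w+1)log(w+1) - w log w ≤ log w + 2 for w ≥ 1

private lemma factF2 {w : ℝ} (hw : 1 ≤ w) :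
    (w+1) * Real.log (w+1) - w * Real.log w ≤ Real.log w + 2 := by
  have h1 : Real.log (w+1) ≤ Real.log 2 + Real.log w := by
    rw [← Real.log_mul (by norm_num) (by linarith)]
    exact Real.log_le_log (by linarith) (by linarith)
  have hlog2 : Real.log 2 ≤ 1 := by
    have := Real.log_le_sub_one_of_pos (show (0:ℝ) < 2 by norm_num); linarith
  have h2 : Real.log (w+1) - Real.log w ≤ 1/w := by
    rw [← Real.log_div (by linarith) (by linarith)]
    have := Real.log_le_sub_one_of_pos (show (0:ℝ) < (w+1)/w by positivity)
    have heq : (w+1)/w - 1 = 1/w := by field_simp; ring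
    linarith
  have hw0 : (0:ℝ) < w := by linarith
  have h3 : w * (Real.log (w+1) - Real.log w) ≤ 1 := by
    calc w * (Real.log (w+1) - Real.log w) ≤ w * (1/w) := by
          apply mul_le_mul_of_nonneg_left h2 (by linarith)
      _ = 1 := by field_simp
  nlinarith

private lemma LL_growth {n : ℕ} (hn : 1 ≤ n) :
    ∃ j2 : ℕ, 99 ≤ j2 ∧ ∀ j, j2 ≤ j → (j:ℝ)/2 ≤ LL n j := by
  set j1 := max 99 ⌈Real.exp (Real.exp 37)⌉₊ with hj1
  have hj199 : 99 ≤ j1 := le_max_left _ _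
  have hbig : ∀ j, j1 ≤ j → Real.exp 37 ≤ LL n j := by
    intro j hj
    have h0 : (⌈Real.exp (Real.exp 37)⌉₊ : ℝ) ≤ j := by
      exact_mod_cast (le_trans (le_max_right 99 _) hj)
    have h1 : Real.exp (Real.exp 37) ≤ 1 + (j:ℝ) :=
      le_trans (Nat.le_ceil _) (by linarith)
    calc Real.exp 37 = Real.log (Real.exp (Real.exp 37)) := (Real.log_exp _).symm
      _ ≤ Real.log (1 + (j:ℝ)) := Real.log_le_log (Real.exp_pos _) h1
      _ ≤ LL n j := LL_lb hn j
  have hstep : ∀ k : ℕ, (k:ℝ) ≤ LL n (j1 + k) := by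
    intro k
    induction k with
    | zero => simpa using LL_nonneg hn j1
    | succ k ih =>
        have hjk : 99 ≤ j1 + k := by omega
        have h1 : Real.exp 37 ≤ LL n (j1 + k) := hbig _ (by omega)
        have h2 : (37:ℝ) ≤ Real.log (LL n (j1 + k)) := by
          calc (37:ℝ) = Real.log (Real.exp 37) := (Real.log_exp _).symm
            _ ≤ Real.log (LL n (j1 + k)) := Real.log_le_log (Real.exp_pos _) h1
        have h3 := step_lb hn hjk
        have : LL n (j1 + k + 1) ≥ (k:ℝ) + 1 := by linarith
        have heq : j1 + (k+1) = j1 + k + 1 := by omega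
        rw [heq]
        push_cast
        linarith
  refine ⟨2*j1 + 99, by omega, fun j hj => ?_⟩
  have hk : j = j1 + (j - j1) := by omega
  have h1 : ((j - j1 : ℕ):ℝ) ≤ LL n j := by
    conv_rhs => rw [hk]
    exact hstep (j - j1)
  have h2 : (j:ℝ)/2 ≤ ((j - j1:ℕ):ℝ) := by
    have : j ≤ 2 * (j - j1) := by omega
    have := (Nat.cast_le (α := ℝ)).2 this
    push_cast at this
    linarith
  linarith

private lemma LL_poly {n : ℕ} (hn : 1 ≤ n) :
    ∃ A : ℝ, 1 ≤ A ∧ ∀ j : ℕ, 99 ≤ j → LL n j ≤ A * ((j:ℝ)+2)^2 := by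
  set A := max 36 (LL n 99) with hA
  have hA1 : (1:ℝ) ≤ A := le_trans (by norm_num) (le_max_left _ _)
  have hA36 : (36:ℝ) ≤ A := le_max_left _ _
  have hsqrtA : Real.sqrt A ≤ A := by
    nlinarith [Real.sq_sqrt (show (0:ℝ) ≤ A by linarith), Real.sqrt_nonneg A,
      Real.sqrt_le_sqrt hA1, Real.sqrt_one]
  have key : ∀ k : ℕ, LL n (99 + k) ≤ A * ((k:ℝ)+2)^2 := by
    intro k
    induction k with
    | zero => 
        have : LL n 99 ≤ A := le_max_right _ _
        push_cast
        nlinarith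
    | succ k ih =>
        have hjk : 99 ≤ 99 + k := by omega
        have hpos : 1 ≤ LL n (99 + k) := LL_one hn hjk
        have hk2 : (1:ℝ) ≤ (k:ℝ) + 2 := by have : (0:ℝ) ≤ (k:ℝ) := Nat.cast_nonneg k; linarith
        have hlog : Real.log (LL n (99 + k)) ≤ 2 * A * ((k:ℝ)+2) := by
          have h1 : Real.log (LL n (99 + k)) ≤ Real.log (A * ((k:ℝ)+2)^2) :=
            Real.log_le_log (by linarith) ih
          have h2 : Real.log (A * ((k:ℝ)+2)^2) ≤ 2 * Real.sqrt (A * ((k:ℝ)+2)^2) := by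
            have hx : (0:ℝ) < A * ((k:ℝ)+2)^2 := by positivity
            have := Real.log_le_sub_one_of_pos (Real.sqrt_pos.2 hx)
            rw [Real.log_sqrt hx.le] at this
            nlinarith [Real.sqrt_nonneg (A * ((k:ℝ)+2)^2)]
          have h3 : Real.sqrt (A * ((k:ℝ)+2)^2) = Real.sqrt A * ((k:ℝ)+2) := by
            rw [Real.sqrt_mul (by linarith), Real.sqrt_sq (by linarith)]
          rw [h3] at h2
          have h4 : Real.sqrt A * ((k:ℝ)+2) ≤ A * ((k:ℝ)+2) :=
            mul_le_mul_of_nonneg_right hsqrtA (by linarith)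
          linarith
        have hstep := step_ub hn hjk
        have heq : 99 + (k+1) = (99 + k) + 1 := by omega
        rw [heq]
        push_cast
        nlinarith
  refine ⟨A, hA1, fun j hj => ?_⟩
  have hk : j = 99 + (j - 99) := by omega
  have h1 := key (j - 99)
  have h2 : ((j - 99:ℕ):ℝ) + 2 ≤ (j:ℝ) + 2 := by
    have : (j - 99 : ℕ) ≤ j := by omega
    have := (Nat.cast_le (α := ℝ)).2 this
    linarith
  calc LL n j = LL n (99 + (j - 99)) := by rw [← hk]
    _ ≤ A * (((j-99:ℕ):ℝ)+2)^2 := h1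
    _ ≤ A * ((j:ℝ)+2)^2 := by
        apply mul_le_mul_of_nonneg_left _ (by linarith)
        have h0 : (0:ℝ) ≤ ((j-99:ℕ):ℝ) + 2 := by positivity
        nlinarith

private lemma log_le_two_sqrt {x : ℝ} (hx : 0 < x) : Real.log x ≤ 2 * Real.sqrt x := by
  have h1 : Real.log x = 2 * Real.log (Real.sqrt x) := by
    rw [Real.log_sqrt hx.le]; ring
  have h2 : Real.log (Real.sqrt x) ≤ Real.sqrt x - 1 :=
    Real.log_le_sub_one_of_pos (Real.sqrt_pos.2 hx)
  nlinarith [Real.sqrt_nonneg x]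

private lemma log99 {j : ℕ} (hj : 99 ≤ j) : 1 ≤ Real.log j := by
  have h1 : Real.exp 1 ≤ (j:ℝ) := by
    have := Real.exp_one_lt_d9
    have : Real.exp 1 ≤ 99 := by linarith
    have h2 : (99:ℝ) ≤ j := by exact_mod_cast hj
    linarith
  calc (1:ℝ) = Real.log (Real.exp 1) := (Real.log_exp 1).symm
    _ ≤ Real.log j := Real.log_le_log (Real.exp_pos 1) h1

private lemma LL_loglog_ub {n : ℕ} (hn : 1 ≤ n) :
    ∃ D : ℝ, ∀ j : ℕ, 99 ≤ j →
      Real.log (LL n j) ≤ D + Real.log j + Real.log (Real.log j) := by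
  obtain ⟨A, hA1, hA⟩ := LL_poly hn
  set C1 := Real.log A + 36 with hC1
  have hlogA : 0 ≤ Real.log A := Real.log_nonneg hA1
  have hC1pos : (0:ℝ) < C1 := by rw [hC1]; linarith
  -- increment bound
  have hinc : ∀ j : ℕ, 99 ≤ j → LL n (j+1) ≤ LL n j + C1 + 4 * Real.log j := by
    intro j hj
    have hj2 : (2:ℝ) ≤ (j:ℝ) := by exact_mod_cast (show 2 ≤ j by omega)
    have h1 : Real.log (LL n j) ≤ Real.log (A * ((j:ℝ)+2)^2) :=
      Real.log_le_log (by linarith [LL_one hn hj]) (hA j hj)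
    have h2 : Real.log (A * ((j:ℝ)+2)^2) = Real.log A + 2 * Real.log ((j:ℝ)+2) := by
      rw [Real.log_mul (by linarith) (by positivity), Real.log_pow]
      push_cast; ring
    have h3 : Real.log ((j:ℝ)+2) ≤ 2 * Real.log j := by
      have : Real.log ((j:ℝ)+2) ≤ Real.log ((j:ℝ)^2) :=
        Real.log_le_log (by linarith) (by nlinarith)
      rwa [Real.log_pow] at this
      -- cast of 2
    have := step_ub hn hj
    push_cast at h3
    linarith
  have key : ∀ k : ℕ, LL n (99 + k) ≤ LL n 99 + k * (C1 + 4 * Real.log ((99:ℝ) + k)) := by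
    intro k
    induction k with
    | zero => push_cast; simp
    | succ k ih =>
        have hjk : 99 ≤ 99 + k := by omega
        have h1 := hinc (99 + k) hjk
        have hmono : Real.log ((99:ℝ) + k) ≤ Real.log ((99:ℝ) + (k+1)) := by
          apply Real.log_le_log (by positivity)
          push_cast; linarith
        have hlogpos : 0 ≤ Real.log ((99:ℝ) + k) := by
          apply Real.log_nonneg
          have : (0:ℝ) ≤ (k:ℝ) := Nat.cast_nonneg k
          linarith
        have heq : 99 + (k+1) = (99 + k) + 1 := by omega
        rw [heq]
        push_cast at h1 ih ⊢
        nlinarith [Nat.cast_nonneg (α := ℝ) k]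
  set D := Real.log (LL n 99 + C1 + 4) with hD
  refine ⟨D, fun j hj => ?_⟩
  have hLL99 : 0 ≤ LL n 99 := LL_nonneg hn 99
  have hlogj : 1 ≤ Real.log j := log99 hj
  have hjpos : (1:ℝ) ≤ (j:ℝ) := by exact_mod_cast (show 1 ≤ j by omega)
  have h1 : LL n j ≤ LL n 99 + j * (C1 + 4 * Real.log j) := by
    obtain ⟨k, rfl⟩ : ∃ k, j = 99 + k := ⟨j - 99, by omega⟩
    have h2 := key k
    have hc : ((99:ℝ) + (k:ℝ)) = ((99 + k : ℕ):ℝ) := by push_cast; ring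
    rw [hc] at h2
    refine le_trans h2 ?_
    have hk0 : (0:ℝ) ≤ (k:ℝ) := Nat.cast_nonneg k
    have hkle : (k:ℝ) ≤ ((99+k:ℕ):ℝ) := by push_cast; linarith
    have hlognn : 0 ≤ Real.log ((99+k:ℕ):ℝ) := by
      apply Real.log_nonneg; push_cast; linarith
    nlinarith
  -- LL n j ≤ (LL n 99 + C1 + 4) * (j * log j)
  have h2 : LL n j ≤ (LL n 99 + C1 + 4) * ((j:ℝ) * Real.log j) := by
    have hjlog : (j:ℝ) ≤ (j:ℝ) * Real.log j := by nlinarith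
    have hjlog1 : (1:ℝ) ≤ (j:ℝ) * Real.log j := by nlinarith
    nlinarith
  have hLLpos : (0:ℝ) < LL n j := by linarith [LL_one hn hj]
  calc Real.log (LL n j) ≤ Real.log ((LL n 99 + C1 + 4) * ((j:ℝ) * Real.log j)) :=
        Real.log_le_log hLLpos h2
    _ = D + Real.log j + Real.log (Real.log j) := by
        rw [hD, Real.log_mul (by linarith) (by positivity),
          Real.log_mul (by positivity) (by positivity)]
        ring

private lemma main_ub {n : ℕ} (hn : 1 ≤ n) {δ : ℝ} (hδ : 0 < δ) :
    ∃ (N : ℕ) (MU : ℝ), 0 ≤ MU ∧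
      ∀ j : ℕ, N ≤ j → LL n j ≤ (1+δ) * ((j:ℝ) * Real.log j) + MU := by
  obtain ⟨D, hD⟩ := LL_loglog_ub hn
  obtain ⟨T, hT0, hT⟩ := sqrt_helper (δ := δ/2) (C := D) (by linarith)
  set jU := max 99 ⌈Real.exp (max T (72/δ))⌉₊ with hjU
  have hjU99 : 99 ≤ jU := le_max_left _ _
  -- properties for j ≥ jU
  have hprop : ∀ j : ℕ, jU ≤ j →
      Real.log (LL n j) ≤ (1 + δ/2) * Real.log j ∧ 36 ≤ δ/2 * Real.log j := by
    intro j hj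
    have hj99 : 99 ≤ j := le_trans hjU99 hj
    have hceil : (⌈Real.exp (max T (72/δ))⌉₊ : ℝ) ≤ j := by
      exact_mod_cast le_trans (le_max_right 99 _) hj
    have hexp : Real.exp (max T (72/δ)) ≤ (j:ℝ) := le_trans (Nat.le_ceil _) hceil
    have hlogj_ge : max T (72/δ) ≤ Real.log j := by
      calc max T (72/δ) = Real.log (Real.exp (max T (72/δ))) := (Real.log_exp _).symm
        _ ≤ Real.log j := Real.log_le_log (Real.exp_pos _) hexp
    have h72 : 72/δ ≤ Real.log j := le_trans (le_max_right _ _) hlogj_ge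
    have hTlog : T ≤ Real.log j := le_trans (le_max_left _ _) hlogj_ge
    have hlogj_pos : 0 < Real.log j := by
      have : (0:ℝ) < 72/δ := by positivity
      linarith
    constructor
    · have h1 := hD j hj99
      have h2 : Real.log (Real.log j) ≤ 2 * Real.sqrt (Real.log j) :=
        log_le_two_sqrt hlogj_pos
      have h3 := hT (Real.log j) hTlog
      nlinarith
    · rw [div_le_iff₀ hδ] at h72
      linarith
  refine ⟨jU, LL n jU, LL_nonneg hn jU, ?_⟩
  have key : ∀ k : ℕ, LL n (jU + k) ≤ (1+δ) * (((jU+k:ℕ):ℝ) * Real.log ((jU+k:ℕ):ℝ)) + LL n jU := by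
    intro k
    induction k with
    | zero =>
        have h1 : (1:ℝ) ≤ Real.log ((jU:ℕ):ℝ) := log99 hjU99
        have h2 : (0:ℝ) ≤ ((jU:ℕ):ℝ) := Nat.cast_nonneg _
        have h3 : (0:ℝ) ≤ ((jU:ℕ):ℝ) * Real.log ((jU:ℕ):ℝ) := by nlinarith
        simp only [Nat.add_zero]
        nlinarith
    | succ k ih =>
        have hw99 : 99 ≤ jU + k := by omega
        have hwU : jU ≤ jU + k := by omega
        obtain ⟨hlogLL, h36⟩ := hprop (jU + k) hwU
        have hstep := step_ub hn hw99
        have hwr1 : (1:ℝ) ≤ ((jU+k:ℕ):ℝ) := by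
          exact_mod_cast (show 1 ≤ jU + k by omega)
        have hF := factF hwr1
        have hmul : (1+δ) * Real.log ((jU+k:ℕ):ℝ) ≤
            (1+δ) * ((((jU+k:ℕ):ℝ)+1) * Real.log (((jU+k:ℕ):ℝ)+1)
              - ((jU+k:ℕ):ℝ) * Real.log ((jU+k:ℕ):ℝ)) :=
          mul_le_mul_of_nonneg_left hF (by linarith)
        have heq : jU + (k+1) = (jU + k) + 1 := by omega
        rw [heq]
        have hcast : (((jU+k+1:ℕ)):ℝ) = ((jU+k:ℕ):ℝ) + 1 := by push_cast; ring
        rw [hcast]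
        nlinarith
  intro j hj
  obtain ⟨k, rfl⟩ : ∃ k, j = jU + k := ⟨j - jU, by omega⟩
  exact key k

private lemma main_lb {n : ℕ} (hn : 1 ≤ n) {δ : ℝ} (hδ : 0 < δ) (hδ1 : δ ≤ 1) :
    ∃ (N : ℕ) (ML : ℝ), 0 ≤ ML ∧
      ∀ j : ℕ, N ≤ j → (1-δ) * ((j:ℝ) * Real.log j) - ML ≤ LL n j := by
  obtain ⟨j2, hj299, hgrow⟩ := LL_growth hn
  set jL := max j2 ⌈Real.exp (76/δ)⌉₊ with hjL
  have hjL2 : j2 ≤ jL := le_max_left _ _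
  have hjL99 : 99 ≤ jL := le_trans hj299 hjL2
  have hprop : ∀ j : ℕ, jL ≤ j →
      (1 - δ/2) * Real.log j ≤ Real.log (LL n j) ∧ 38 ≤ δ/2 * Real.log j := by
    intro j hj
    have hj99 : 99 ≤ j := le_trans hjL99 hj
    have hceil : (⌈Real.exp (76/δ)⌉₊ : ℝ) ≤ j := by
      exact_mod_cast le_trans (le_max_right j2 _) hj
    have hexp : Real.exp (76/δ) ≤ (j:ℝ) := le_trans (Nat.le_ceil _) hceil
    have hlogj_ge : 76/δ ≤ Real.log j := by
      calc 76/δ = Real.log (Real.exp (76/δ)) := (Real.log_exp _).symm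
        _ ≤ Real.log j := Real.log_le_log (Real.exp_pos _) hexp
    have h38 : 38 ≤ δ/2 * Real.log j := by
      rw [div_le_iff₀ hδ] at hlogj_ge
      linarith
    refine ⟨?_, h38⟩
    have hjpos : (1:ℝ) ≤ (j:ℝ) := by exact_mod_cast (show 1 ≤ j by omega)
    have hgj := hgrow j (le_trans hjL2 hj)
    have hlog2 : Real.log 2 ≤ 1 := by
      have := Real.log_le_sub_one_of_pos (show (0:ℝ) < 2 by norm_num); linarith
    have h1 : Real.log ((j:ℝ)/2) ≤ Real.log (LL n j) :=
      Real.log_le_log (by positivity) hgj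
    rw [Real.log_div (by positivity) (by norm_num)] at h1
    linarith
  refine ⟨jL, (1-δ) * (((jL:ℕ):ℝ) * Real.log ((jL:ℕ):ℝ)), ?_, ?_⟩
  · have h1 : (1:ℝ) ≤ Real.log ((jL:ℕ):ℝ) := log99 hjL99
    have h2 : (0:ℝ) ≤ ((jL:ℕ):ℝ) := Nat.cast_nonneg _
    have h3 : (0:ℝ) ≤ ((jL:ℕ):ℝ) * Real.log ((jL:ℕ):ℝ) := mul_nonneg h2 (by linarith)
    exact mul_nonneg (by linarith) h3
  have key : ∀ k : ℕ,
      (1-δ) * (((jL+k:ℕ):ℝ) * Real.log ((jL+k:ℕ):ℝ))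
        - (1-δ) * (((jL:ℕ):ℝ) * Real.log ((jL:ℕ):ℝ)) ≤ LL n (jL+k) := by
    intro k
    induction k with
    | zero =>
        simp only [Nat.add_zero, sub_self]
        exact LL_nonneg hn jL
    | succ k ih =>
        have hw99 : 99 ≤ jL + k := by omega
        have hwL : jL ≤ jL + k := by omega
        obtain ⟨hlogLL, h38⟩ := hprop (jL + k) hwL
        have hstep := step_lb hn hw99
        have hwr1 : (1:ℝ) ≤ ((jL+k:ℕ):ℝ) := by
          exact_mod_cast (show 1 ≤ jL + k by omega)
        have hF := factF2 hwr1
        have hmul : (1-δ) * ((((jL+k:ℕ):ℝ)+1) * Real.log (((jL+k:ℕ):ℝ)+1)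
              - ((jL+k:ℕ):ℝ) * Real.log ((jL+k:ℕ):ℝ)) ≤
            (1-δ) * (Real.log ((jL+k:ℕ):ℝ) + 2) :=
          mul_le_mul_of_nonneg_left hF (by linarith)
        have heq : jL + (k+1) = (jL + k) + 1 := by omega
        rw [heq]
        have hcast : (((jL+k+1:ℕ)):ℝ) = ((jL+k:ℕ):ℝ) + 1 := by push_cast; ring
        rw [hcast]
        have hlogwr : 0 ≤ Real.log ((jL+k:ℕ):ℝ) := by
          have := log99 hw99; linarith
        nlinarith
  intro j hj
  obtain ⟨k, rfl⟩ : ∃ k, j = jL + k := ⟨j - jL, by omega⟩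
  exact key k

theorem iterated_prime_column_log_asymptotic (n : ℕ) (hn : 1 ≤ n) :
    Tendsto (fun j : ℕ => Real.log (pk j n) / ((j : ℝ) * Real.log j)) atTop (𝓝 1) := by
  rw [Metric.tendsto_atTop]
  intro ε hε
  set δ := min (ε/4) (1/2) with hδdef
  have hδ0 : 0 < δ := lt_min (by linarith) (by norm_num)
  have hδ1 : δ ≤ 1 := le_trans (min_le_right _ _) (by norm_num)
  have hδε : δ ≤ ε/4 := min_le_left _ _
  obtain ⟨N1, MU, hMU0, hU⟩ := main_ub hn hδ0
  obtain ⟨N2, ML, hML0, hL⟩ := main_lb hn hδ0 hδ1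
  set N3 : ℕ := max 99 ⌈(max MU ML)/δ⌉₊ with hN3
  refine ⟨max (max N1 N2) N3, fun j hj => ?_⟩
  have hjN1 : N1 ≤ j := le_trans (le_max_of_le_left (le_max_left _ _)) hj
  have hjN2 : N2 ≤ j := le_trans (le_max_of_le_left (le_max_right _ _)) hj
  have hj99 : 99 ≤ j := le_trans (le_max_of_le_right (le_max_left _ _)) hj
  have hjc : (max MU ML)/δ ≤ (j:ℝ) := by
    have h1 : (⌈(max MU ML)/δ⌉₊ : ℝ) ≤ j := by
      exact_mod_cast le_trans (le_max_of_le_right (le_max_right 99 _)) hj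
    exact le_trans (Nat.le_ceil _) h1
  have hlogj : 1 ≤ Real.log j := log99 hj99
  have hjpos : (1:ℝ) ≤ (j:ℝ) := by exact_mod_cast (show 1 ≤ j by omega)
  have hjl : (0:ℝ) < (j:ℝ) * Real.log j := by nlinarith
  have hmax : max MU ML ≤ δ * ((j:ℝ) * Real.log j) := by
    rw [div_le_iff₀ hδ0] at hjc
    have h2 : (j:ℝ) ≤ (j:ℝ) * Real.log j := by nlinarith
    nlinarith
  have hMUj : MU ≤ δ * ((j:ℝ) * Real.log j) := le_trans (le_max_left _ _) hmax
  have hMLj : ML ≤ δ * ((j:ℝ) * Real.log j) := le_trans (le_max_right _ _) hmax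
  have hUj := hU j hjN1
  have hLj := hL j hjN2
  have hLLeq : Real.log (pk j n) = LL n j := rfl
  rw [Real.dist_eq, abs_sub_lt_iff]
  have hratio_ub : Real.log (pk j n) / ((j:ℝ) * Real.log j) ≤ 1 + 2*δ := by
    rw [div_le_iff₀ hjl, hLLeq]
    nlinarith
  have hratio_lb : 1 - 2*δ ≤ Real.log (pk j n) / ((j:ℝ) * Real.log j) := by
    rw [le_div_iff₀ hjl, hLLeq]
    nlinarith
  constructor
  · linarith
  · linarith
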